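/- Let P = ⟨n/p_n : n ∈ ℕ⟩ where p_n is the n-th prime. Then P is atomic with A(P) = {n/p_n : n ∈ ℕ}, P is bounded, P contains no stable atom, and 0 is a limit point of P. -/

import Mathlib

/-- A Puiseux monoid: an additive submonoid of ℚ consisting of nonnegative rationals. -/
def PM.Puiseux (P : AddSubmonoid ℚ) : Prop := ∀ x ∈ P, 0 ≤ x

/-- `a` is an atom of `P`. -/
def PM.IsAtom (P : AddSubmonoid ℚ) (a : ℚ) : Prop :=
  a ∈ P ∧ a ≠ 0 ∧ ∀ x ∈ P, ∀ y ∈ P, a = x + y → x = 0 ∨ y = 0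

/-- A factorization of `x` is a multiset of atoms of `P` summing to `x`. -/
def PM.IsFactorization (P : AddSubmonoid ℚ) (x : ℚ) (z : Multiset ℚ) : Prop :=
  (∀ a ∈ z, PM.IsAtom P a) ∧ z.sum = x

/-- The set of lengths of `x`. -/
def PM.Lengths (P : AddSubmonoid ℚ) (x : ℚ) : Set ℕ :=
  {n | ∃ z : Multiset ℚ, PM.IsFactorization P x z ∧ Multiset.card z = n}

/-- `P` is atomic: it is generated by its set of atoms. -/
def PM.Atomic (P : AddSubmonoid ℚ) : Prop :=
  AddSubmonoid.closure {a | PM.IsAtom P a} = P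

/-- The union of sets of lengths `U_k(P)`. -/
def PM.U (P : AddSubmonoid ℚ) (k : ℕ) : Set ℕ :=
  {l | ∃ x ∈ P, k ∈ PM.Lengths P x ∧ l ∈ PM.Lengths P x}

namespace Stmt17Aux

noncomputable def g (n : ℕ) : ℚ := ((n + 1 : ℕ) : ℚ) / (Nat.nth Nat.Prime n)

lemma prime_nth (n : ℕ) : Nat.Prime (Nat.nth Nat.Prime n) := Nat.prime_nth_prime n

lemma nth_sm : StrictMono (Nat.nth Nat.Prime) := Nat.nth_strictMono Nat.infinite_setOf_prime

lemma lt_nth (n : ℕ) : n + 1 < Nat.nth Nat.Prime n := by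
  induction n with
  | zero => exact (prime_nth 0).two_le
  | succ n ih =>
    have : Nat.nth Nat.Prime n < Nat.nth Nat.Prime (n+1) := nth_sm (by omega)
    omega

lemma g_pos (n : ℕ) : 0 < g n := by
  apply div_pos
  · exact_mod_cast Nat.succ_pos n
  · exact_mod_cast (prime_nth n).pos

lemma g_lt_one (n : ℕ) : g n < 1 := by
  rw [g, div_lt_one (by exact_mod_cast (prime_nth n).pos)]
  exact_mod_cast lt_nth n

lemma g_num (n : ℕ) : (g n).num = (n : ℤ) + 1 := by
  have h : g n = ((n : ℤ) + 1 : ℤ) / ((Nat.nth Nat.Prime n : ℤ) : ℚ) := by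
    rw [g]; push_cast; ring
  rw [h, Rat.num_div_eq_of_coprime (by exact_mod_cast (prime_nth n).pos)]
  · simp only [Int.natAbs_natCast]
    have : ((n : ℤ) + 1).natAbs = n + 1 := by
      rw [show (n : ℤ) + 1 = ((n + 1 : ℕ) : ℤ) by push_cast; ring, Int.natAbs_natCast]
    rw [this]
    exact (Nat.coprime_comm.mp ((Nat.Prime.coprime_iff_not_dvd (prime_nth n)).mpr
      (fun hd => absurd (Nat.le_of_dvd (Nat.succ_pos n) hd) (not_le.mpr (lt_nth n)))))



/-- `q` is `p`-integral. -/
def PInt (p : ℕ) (q : ℚ) : Prop := ∃ a b : ℤ, ¬ (p : ℤ) ∣ b ∧ q = (a : ℚ) / (b : ℚ)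

variable {p : ℕ} (hp : Nat.Prime p)

lemma pz_prime (hp : Nat.Prime p) : Prime (p : ℤ) := Nat.prime_iff_prime_int.mp hp

lemma PInt.zero (hp : Nat.Prime p) : PInt p 0 :=
  ⟨0, 1, by simpa using (pz_prime hp).not_dvd_one, by simp⟩

lemma PInt.add (hp : Nat.Prime p) {x y : ℚ} (hx : PInt p x) (hy : PInt p y) :
    PInt p (x + y) := by
  obtain ⟨a1, b1, h1, rfl⟩ := hx
  obtain ⟨a2, b2, h2, rfl⟩ := hy
  have hb1 : (b1 : ℚ) ≠ 0 := Int.cast_ne_zero.mpr (fun h => h1 (h ▸ dvd_zero _))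
  have hb2 : (b2 : ℚ) ≠ 0 := Int.cast_ne_zero.mpr (fun h => h2 (h ▸ dvd_zero _))
  refine ⟨a1 * b2 + b1 * a2, b1 * b2, ?_, ?_⟩
  · intro h
    rcases (pz_prime hp).dvd_mul.mp h with h | h
    exacts [h1 h, h2 h]
  · push_cast
    rw [div_add_div _ _ hb1 hb2]

lemma PInt.neg (hp : Nat.Prime p) {x : ℚ} (hx : PInt p x) : PInt p (-x) := by
  obtain ⟨a, b, h, rfl⟩ := hx
  exact ⟨-a, b, h, by push_cast; ring⟩

lemma PInt.sub (hp : Nat.Prime p) {x y : ℚ} (hx : PInt p x) (hy : PInt p y) :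
    PInt p (x - y) := by
  rw [sub_eq_add_neg]; exact hx.add hp (hy.neg hp) -- may need arg order fix

lemma PInt.multiset_sum (hp : Nat.Prime p) {s : Multiset ℚ} (h : ∀ x ∈ s, PInt p x) :
    PInt p s.sum := by
  induction s using Multiset.induction_on with
  | empty => simpa using PInt.zero hp
  | cons a s ih =>
    rw [Multiset.sum_cons]
    exact PInt.add hp (h a (Multiset.mem_cons_self a s))
      (ih fun x hx => h x (Multiset.mem_cons_of_mem hx))

lemma PInt_g (hp : Nat.Prime p) {m : ℕ} (h : p ≠ Nat.nth Nat.Prime m) : PInt p (g m) := by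
  refine ⟨((m + 1 : ℕ) : ℤ), ((Nat.nth Nat.Prime m : ℕ) : ℤ), ?_, by rw [g]; push_cast; ring⟩
  intro hd
  have : p ∣ Nat.nth Nat.Prime m := Int.ofNat_dvd.mp hd
  exact h ((Nat.prime_dvd_prime_iff_eq hp (Nat.prime_nth_prime m)).mp this)


lemma mem_core {n : ℕ} {z : Multiset ℕ} (hz : (z.map g).sum = g n) : ∀ m ∈ z, m = n := by
  intro m hm
  by_contra hmn
  have hp : Nat.Prime (Nat.nth Nat.Prime m) := prime_nth m
  set p := Nat.nth Nat.Prime m with hp_def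
  set c := Multiset.count m z with hc_def
  have hc0 : 0 < c := Multiset.count_pos.mpr hm
  set R := ((Multiset.filter (fun x => ¬ x = m) z).map g).sum with hR_def
  have hsum : (c : ℚ) * g m + R = g n := by
    have h1 : ((Multiset.filter (· = m) z).map g).sum + R = g n := by
      rw [hR_def, ← Multiset.sum_add, ← Multiset.map_add, Multiset.filter_add_not, hz]
    rwa [Multiset.filter_eq', Multiset.map_replicate, Multiset.sum_replicate,
      nsmul_eq_mul] at h1
  have hRint : PInt p R := by
    apply PInt.multiset_sum hp
    intro x hx
    obtain ⟨k, hk, rfl⟩ := Multiset.mem_map.mp hx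
    have hkm : ¬ k = m := (Multiset.mem_filter.mp hk).2
    exact PInt_g hp (fun h => hkm (nth_sm.injective h).symm)
  have hgn : PInt p (g n) := PInt_g hp (fun h => hmn (nth_sm.injective h))
  have hcg : PInt p ((c : ℚ) * g m) := by
    have h2 : (c : ℚ) * g m = g n - R := eq_sub_of_add_eq hsum
    rw [h2]; exact PInt.sub hp hgn hRint
  obtain ⟨a, b, hb, heq⟩ := hcg
  have hb0 : (b : ℚ) ≠ 0 := Int.cast_ne_zero.mpr (fun h => hb (h ▸ dvd_zero _))
  have hp0 : ((p : ℤ) : ℚ) ≠ 0 := by exact_mod_cast hp.pos.ne'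
  have heq2 : ((c : ℚ) * ((m : ℚ) + 1)) / ((p : ℤ) : ℚ) = (a : ℚ) / (b : ℚ) := by
    rw [← heq, g]; push_cast; ring
  have hcross : ((c : ℚ) * ((m : ℚ) + 1)) * (b : ℚ) = (a : ℚ) * ((p : ℤ) : ℚ) :=
    (div_eq_div_iff hp0 hb0).mp heq2
  have hzz : ((c : ℤ) * ((m : ℤ) + 1)) * b = a * (p : ℤ) := by exact_mod_cast hcross
  have hdvd : (p : ℤ) ∣ ((c : ℤ) * ((m : ℤ) + 1)) * b := hzz ▸ dvd_mul_left _ _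
  have hple : p ≤ c := by
    rcases (pz_prime hp).dvd_mul.mp hdvd with h | h
    · rcases (pz_prime hp).dvd_mul.mp h with h' | h'
      · have : p ∣ c := by exact_mod_cast h'
        exact Nat.le_of_dvd hc0 this
      · exfalso
        have : p ∣ m + 1 := by exact_mod_cast h'
        exact absurd (Nat.le_of_dvd (Nat.succ_pos m) this) (not_le.mpr (lt_nth m))
    · exact absurd h hb
  have hR0 : 0 ≤ R := by
    apply Multiset.sum_nonneg
    intro x hx
    obtain ⟨k, _, rfl⟩ := Multiset.mem_map.mp hx
    exact (g_pos k).le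
  have hpg : (p : ℚ) * g m = (m : ℚ) + 1 := by
    rw [g]
    have : ((Nat.nth Nat.Prime m : ℕ) : ℚ) ≠ 0 := by exact_mod_cast hp.pos.ne'
    field_simp
    rw [hp_def]; push_cast; ring
  have h1 : (p : ℚ) * g m ≤ (c : ℚ) * g m :=
    mul_le_mul_of_nonneg_right (by exact_mod_cast hple) (g_pos m).le
  have hm0 : (0 : ℚ) ≤ (m : ℚ) := Nat.cast_nonneg m
  linarith [g_lt_one n]

lemma core {n : ℕ} {z : Multiset ℕ} (hz : (z.map g).sum = g n) :
    Multiset.card z = 1 := by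
  have hrep : z = Multiset.replicate (Multiset.card z) n :=
    Multiset.eq_replicate_card.mpr (mem_core hz)
  rw [hrep, Multiset.map_replicate, Multiset.sum_replicate, nsmul_eq_mul] at hz
  have : ((Multiset.card z : ℕ) : ℚ) = 1 :=
    mul_right_cancel₀ (g_pos n).ne' (by rw [hz, one_mul])
  exact_mod_cast this

lemma exists_index {s : Multiset ℚ} (h : ∀ x ∈ s, ∃ k, x = g k) :
    ∃ w : Multiset ℕ, s = w.map g := by
  induction s using Multiset.induction_on with
  | empty => exact ⟨0, rfl⟩
  | cons a s ih =>
    obtain ⟨k, hk⟩ := h a (Multiset.mem_cons_self a s)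
    obtain ⟨w, hw⟩ := ih (fun x hx => h x (Multiset.mem_cons_of_mem hx))
    exact ⟨k ::ₘ w, by rw [Multiset.map_cons, ← hk, ← hw]⟩


lemma exists_gt (q : ℕ) : ∃ n : ℕ, q * (n + 1) < Nat.nth Nat.Prime n := by
  by_contra hcon
  push_neg at hcon
  obtain ⟨n0, hev⟩ := (Nat.eventually_pow_lt_factorial_sub (4 ^ q) 1).exists_forall_of_atTop
  set N := max n0 2 with hN
  have hfac : (4 ^ q) ^ N < Nat.factorial (N - 1) := hev N (le_max_left _ _)
  set M := N - 1 with hM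
  have hM1 : 1 ≤ M := by omega
  have key1 : Nat.factorial M ≤ ∏ i ∈ Finset.range M, Nat.nth Nat.Prime i := by
    rw [← Finset.prod_range_add_one_eq_factorial]
    exact Finset.prod_le_prod' fun i _ => (lt_nth i).le
  have key2 : (∏ i ∈ Finset.range M, Nat.nth Nat.Prime i) ≤ primorial (q * M) := by
    have hinj : ∀ i ∈ Finset.range M, ∀ j ∈ Finset.range M,
        Nat.nth Nat.Prime i = Nat.nth Nat.Prime j → i = j :=
      fun i _ j _ h => nth_sm.injective h
    have hsub : (Finset.range M).image (Nat.nth Nat.Prime) ⊆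
        Finset.filter Nat.Prime (Finset.range (q * M + 1)) := by
      intro x hx
      obtain ⟨i, hi, rfl⟩ := Finset.mem_image.mp hx
      rw [Finset.mem_range] at hi
      refine Finset.mem_filter.mpr ⟨Finset.mem_range.mpr ?_, prime_nth i⟩
      have h1 : Nat.nth Nat.Prime i ≤ q * (i + 1) := hcon i
      have h2 : q * (i + 1) ≤ q * M := Nat.mul_le_mul_left q (by omega)
      omega
    calc (∏ i ∈ Finset.range M, Nat.nth Nat.Prime i)
        = ∏ x ∈ (Finset.range M).image (Nat.nth Nat.Prime), x :=
          (Finset.prod_image (f := fun x => x) hinj).symm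
      _ ≤ ∏ x ∈ Finset.filter Nat.Prime (Finset.range (q * M + 1)), x :=
          Finset.prod_le_prod_of_subset_of_one_le' hsub
            (fun p hp _ => (Finset.mem_filter.mp hp).2.one_lt.le)
      _ = primorial (q * M) := rfl
  have key3 : primorial (q * M) ≤ 4 ^ (q * M) := primorial_le_4_pow _
  have key4 : (4 : ℕ) ^ (q * M) = (4 ^ q) ^ M := by rw [pow_mul]
  have key5 : (4 ^ q) ^ M ≤ (4 ^ q) ^ N := Nat.pow_le_pow_right (by positivity) (by omega)
  omega

end Stmt17Aux

theorem stmt17 :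
    let A : Set ℚ := {q | ∃ n : ℕ, q = ((n + 1 : ℕ) : ℚ) / (Nat.nth Nat.Prime n)}
    let P := AddSubmonoid.closure A
    PM.Atomic P ∧ {a : ℚ | PM.IsAtom P a} = A ∧
      BddAbove A ∧
      (∀ m : ℤ, {a : ℚ | PM.IsAtom P a ∧ a.num = m}.Finite) ∧
      ∀ ε : ℚ, 0 < ε → ∃ x ∈ P, x ≠ 0 ∧ x < ε := by
  intro A P
  have hmemA : ∀ q : ℚ, q ∈ A ↔ ∃ n : ℕ, q = Stmt17Aux.g n := fun q => Iff.rfl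
  have hgA : ∀ n : ℕ, Stmt17Aux.g n ∈ A := fun n => (hmemA _).mpr ⟨n, rfl⟩
  have hatoms : {a : ℚ | PM.IsAtom P a} = A := by
    apply Set.eq_of_subset_of_subset
    · rintro a ⟨haP, ha0, hsplit⟩
      obtain ⟨s, hsA, hsum⟩ := AddSubmonoid.exists_multiset_of_mem_closure haP
      have hs0 : s ≠ 0 := by rintro rfl; exact ha0 (by simp [← hsum])
      obtain ⟨x, hx⟩ := Multiset.exists_mem_of_ne_zero hs0
      have hxP : x ∈ P := AddSubmonoid.subset_closure (hsA x hx)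
      have herase : a = x + (s.erase x).sum := by
        rw [← hsum, ← Multiset.sum_cons, Multiset.cons_erase hx]
      have hrestP : (s.erase x).sum ∈ P :=
        AddSubmonoid.multiset_sum_mem _ _ (fun y hy =>
          AddSubmonoid.subset_closure (hsA y (Multiset.mem_of_mem_erase hy)))
      rcases hsplit x hxP _ hrestP herase with h | h
      · exfalso
        obtain ⟨k, rfl⟩ := (hmemA x).mp (hsA x hx)
        exact (Stmt17Aux.g_pos k).ne' h
      · rw [herase, h, add_zero]; exact hsA x hx
    · intro a haA
      obtain ⟨n, rfl⟩ := (hmemA a).mp haA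
      refine ⟨AddSubmonoid.subset_closure (hgA n), (Stmt17Aux.g_pos n).ne', ?_⟩
      intro x hx y hy hxy
      by_contra hcon
      push_neg at hcon
      obtain ⟨hx0, hy0⟩ := hcon
      obtain ⟨s, hsA, hsum⟩ := AddSubmonoid.exists_multiset_of_mem_closure hx
      obtain ⟨t, htA, htsum⟩ := AddSubmonoid.exists_multiset_of_mem_closure hy
      have hs0 : s ≠ 0 := by rintro rfl; exact hx0 (by simp [← hsum])
      have ht0 : t ≠ 0 := by rintro rfl; exact hy0 (by simp [← htsum])
      obtain ⟨w, hw⟩ := Stmt17Aux.exists_index (s := s + t) (fun u hu => by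
        rcases Multiset.mem_add.mp hu with h | h
        exacts [(hmemA u).mp (hsA u h), (hmemA u).mp (htA u h)])
      have hcard1 : Multiset.card w = 1 := Stmt17Aux.core (n := n) (by
        rw [← hw, Multiset.sum_add, hsum, htsum, ← hxy])
      have hcw : Multiset.card s + Multiset.card t = 1 := by
        rw [← Multiset.card_add, hw, Multiset.card_map, hcard1]
      have h1 := Multiset.card_pos.mpr hs0
      have h2 := Multiset.card_pos.mpr ht0
      omega
  refine ⟨?_, hatoms, ?_, ?_, ?_⟩
  · show AddSubmonoid.closure {a : ℚ | PM.IsAtom P a} = P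
    rw [hatoms]
  · refine ⟨1, fun q hq => ?_⟩
    obtain ⟨n, rfl⟩ := (hmemA q).mp hq
    exact (Stmt17Aux.g_lt_one n).le
  · intro m
    apply Set.Subsingleton.finite
    intro x hx y hy
    have hxA : x ∈ A := by rw [← hatoms]; exact hx.1
    have hyA : y ∈ A := by rw [← hatoms]; exact hy.1
    obtain ⟨n1, rfl⟩ := (hmemA x).mp hxA
    obtain ⟨n2, rfl⟩ := (hmemA y).mp hyA
    have e1 : (n1 : ℤ) + 1 = m := by rw [← Stmt17Aux.g_num n1]; exact hx.2
    have e2 : (n2 : ℤ) + 1 = m := by rw [← Stmt17Aux.g_num n2]; exact hy.2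
    have : n1 = n2 := by omega
    rw [this]
  · intro ε hε
    obtain ⟨n, hn⟩ := Stmt17Aux.exists_gt ⌈ε⁻¹⌉₊
    refine ⟨Stmt17Aux.g n, AddSubmonoid.subset_closure (hgA n), (Stmt17Aux.g_pos n).ne', ?_⟩
    set q : ℕ := ⌈ε⁻¹⌉₊ with hq
    have hq1 : 1 ≤ q := Nat.one_le_ceil_iff.mpr (by positivity)
    have hq0 : (0 : ℚ) < (q : ℚ) := by exact_mod_cast hq1
    have hp0 : (0 : ℚ) < ((Nat.nth Nat.Prime n : ℕ) : ℚ) := by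
      exact_mod_cast (Stmt17Aux.prime_nth n).pos
    have hncast : (q : ℚ) * ((n : ℚ) + 1) < ((Nat.nth Nat.Prime n : ℕ) : ℚ) := by
      exact_mod_cast hn
    have hce : ε⁻¹ ≤ (q : ℚ) := Nat.le_ceil ε⁻¹
    have h2 : (q : ℚ)⁻¹ ≤ ε := by
      have h3 : ε * ε⁻¹ = 1 := mul_inv_cancel₀ hε.ne'
      have h4 : (q : ℚ) * (q : ℚ)⁻¹ = 1 := mul_inv_cancel₀ hq0.ne'
      nlinarith
    have h1 : Stmt17Aux.g n < (q : ℚ)⁻¹ := by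
      rw [Stmt17Aux.g, div_lt_iff₀ hp0]
      have h4 : (q : ℚ) * (q : ℚ)⁻¹ = 1 := mul_inv_cancel₀ hq0.ne'
      push_cast
      nlinarith
    linarith
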